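/- Let U, V be d×d unitary matrices, |ψ⟩ a unit vector with f_V = |⟨ψ|U†V|ψ⟩|², and f_W ∈ [0,1]. Then the minimal phase-corrected Frobenius distance min over unitaries W with |⟨ψ|U†W|ψ⟩|² = f_W of min_ρ ‖V − e^{iρ}W‖_F equals √(4(1 − √(f_V f_W) − √((1−f_V)(1−f_W)))), which is also equal to √(4(1 − cos(γ_V − γ_W))) where γ_V = arccos(√f_V) and γ_W = arccos(√f_W). -/

import Mathlib

open Matrix Complex

noncomputable def frobNorm {d : ℕ} (X : Matrix (Fin d) (Fin d) ℂ) : ℝ :=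
  Real.sqrt ((Matrix.trace (Xᴴ * X)).re)

noncomputable def phaseDist {d : ℕ} (V W : Matrix (Fin d) (Fin d) ℂ) : ℝ :=
  ⨅ ρ : ℝ, frobNorm (V - Complex.exp (ρ * Complex.I) • W)

lemma exp_I_mul_conj (ρ : ℝ) :
    Complex.exp (ρ * Complex.I) * star (Complex.exp (ρ * Complex.I)) = 1 := by
  have h : star (Complex.exp ((ρ:ℂ) * Complex.I)) = Complex.exp (-(ρ * Complex.I)) := by
    rw [Complex.star_def, ← Complex.exp_conj]
    congr 1
    simp [Complex.conj_I]
  rw [h, ← Complex.exp_add]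
  simp

lemma frob_sq {d : ℕ} (V W : Matrix (Fin d) (Fin d) ℂ) (hV : Vᴴ * V = 1) (hW : Wᴴ * W = 1)
    (ρ : ℝ) :
    frobNorm (V - Complex.exp (ρ * Complex.I) • W)
      = Real.sqrt (2 * d - 2 * (Complex.exp (ρ * Complex.I) * Matrix.trace (Vᴴ * W)).re) := by
  set z := Complex.exp (ρ * Complex.I) with hz
  have hzz : z * star z = 1 := exp_I_mul_conj ρ
  have hexp : (V - z • W)ᴴ * (V - z • W)
      = Vᴴ * V - z • (Vᴴ * W) - star z • (Wᴴ * V) + (z * star z) • (Wᴴ * W) := by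
    rw [Matrix.conjTranspose_sub, Matrix.conjTranspose_smul]
    simp only [Matrix.sub_mul, Matrix.mul_sub, Matrix.smul_mul, Matrix.mul_smul, smul_smul,
      smul_sub]
    abel
  have htr : Matrix.trace ((V - z • W)ᴴ * (V - z • W))
      = (2 * d : ℂ) - (z * Matrix.trace (Vᴴ * W) + star (z * Matrix.trace (Vᴴ * W))) := by
    rw [hexp, hzz]
    simp only [Matrix.trace_add, Matrix.trace_sub, Matrix.trace_smul, hV, hW, one_smul,
      Matrix.trace_one, Fintype.card_fin]
    have h1 : Matrix.trace (Wᴴ * V) = star (Matrix.trace (Vᴴ * W)) := by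
      have h2 : Wᴴ * V = (Vᴴ * W)ᴴ := by simp [Matrix.conjTranspose_mul]
      rw [h2, Matrix.trace_conjTranspose]
    rw [h1, star_mul']
    simp only [smul_eq_mul]
    ring
  rw [frobNorm, htr]
  congr 1
  have : (star (z * Matrix.trace (Vᴴ * W))).re = (z * Matrix.trace (Vᴴ * W)).re := by
    simp [Complex.conj_re]
  simp only [Complex.sub_re, Complex.add_re, this, Complex.mul_re, Complex.ofReal_re]
  simp
  ring

lemma phaseDist_eq {d : ℕ} (V W : Matrix (Fin d) (Fin d) ℂ) (hV : Vᴴ * V = 1) (hW : Wᴴ * W = 1) :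
    phaseDist V W = Real.sqrt (2 * d - 2 * ‖Matrix.trace (Vᴴ * W)‖) := by
  set t := Matrix.trace (Vᴴ * W) with ht
  have hbdd : BddBelow (Set.range fun ρ : ℝ => frobNorm (V - Complex.exp (ρ * Complex.I) • W)) := by
    refine ⟨0, ?_⟩
    rintro x ⟨ρ, rfl⟩
    exact Real.sqrt_nonneg _
  apply le_antisymm
  · have hle := ciInf_le hbdd (-t.arg)
    refine hle.trans_eq ?_
    rw [frob_sq V W hV hW]
    congr 3
    have key : ∀ (r θ : ℝ), Complex.exp ((-θ : ℝ) * Complex.I) * ((r : ℂ) * Complex.exp (θ * Complex.I)) = r := by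
      intro r θ
      rw [mul_comm ((r:ℂ)) _, ← mul_assoc, ← Complex.exp_add]
      push_cast
      ring_nf
      simp
    have h1 : Complex.exp ((-t.arg : ℝ) * Complex.I) * t = ‖t‖ := by
      calc Complex.exp ((-t.arg : ℝ) * Complex.I) * t
          = Complex.exp ((-t.arg : ℝ) * Complex.I) * ((‖t‖ : ℂ) * Complex.exp (t.arg * Complex.I)) := by
            rw [Complex.norm_mul_exp_arg_mul_I]
        _ = ‖t‖ := key _ _
    rw [h1]
    simp
  · apply le_ciInf
    intro ρ
    rw [frob_sq V W hV hW]
    apply Real.sqrt_le_sqrt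
    have h2 : (Complex.exp (ρ * Complex.I) * t).re ≤ ‖t‖ := by
      refine (Complex.re_le_norm _).trans ?_
      rw [show ‖Complex.exp (ρ * Complex.I) * t‖
            = ‖Complex.exp (ρ * Complex.I)‖ * ‖t‖ from norm_mul _ _,
        Complex.norm_exp_ofReal_mul_I, one_mul]
    linarith

variable {d : ℕ}

local notation "E" d => EuclideanSpace ℂ (Fin d)
local notation "⟪" x ", " y "⟫" => @inner ℂ _ _ x y

noncomputable def fE {d : ℕ} : (EuclideanSpace ℂ (Fin d)) ≃ (Fin d → ℂ) := WithLp.equiv 2 _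

lemma ip_eq (x y : E d) : ⟪x, y⟫ = star (fE x) ⬝ᵥ fE y :=
  by rw [EuclideanSpace.inner_eq_star_dotProduct, dotProduct_comm]; rfl

lemma fE_symm_apply (x : Fin d → ℂ) (i : Fin d) : (fE.symm x) i = x i := rfl

lemma fE_apply (x : E d) (i : Fin d) : (fE x) i = x i := rfl

/-- The action of a matrix on Euclidean space. -/
noncomputable def act (Z : Matrix (Fin d) (Fin d) ℂ) (x : E d) : E d :=
  fE.symm (Z.mulVec (fE x))

lemma unitary_dot (Z : Matrix (Fin d) (Fin d) ℂ) (hZ : Zᴴ * Z = 1) (x y : Fin d → ℂ) :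
    star (Z.mulVec x) ⬝ᵥ Z.mulVec y = star x ⬝ᵥ y := by
  rw [Matrix.star_mulVec, Matrix.dotProduct_mulVec, Matrix.vecMul_vecMul, hZ,
    Matrix.vecMul_one]

lemma act_inner (Z : Matrix (Fin d) (Fin d) ℂ) (hZ : Zᴴ * Z = 1) (x y : E d) :
    ⟪act Z x, act Z y⟫ = ⟪x, y⟫ := by
  rw [ip_eq, ip_eq, act, act, Equiv.apply_symm_apply, Equiv.apply_symm_apply,
    unitary_dot Z hZ]

lemma act_norm (Z : Matrix (Fin d) (Fin d) ℂ) (hZ : Zᴴ * Z = 1) (x : E d) :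
    ‖act Z x‖ = ‖x‖ := by
  rw [@norm_eq_sqrt_re_inner ℂ, @norm_eq_sqrt_re_inner ℂ _ _ _ _ x, act_inner Z hZ]

lemma trace_eq_sum_inner (Z : Matrix (Fin d) (Fin d) ℂ)
    (b : OrthonormalBasis (Fin d) ℂ (E d)) :
    Matrix.trace Z = ∑ j, ⟪b j, act Z (b j)⟫ := by
  classical
  set B := (EuclideanSpace.basisFun (Fin d) ℂ).toBasis.toMatrix b.toBasis with hB
  have hBapp : ∀ i j, B i j = b j i := fun i j => rfl
  have hBU : B * Bᴴ = 1 :=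
    (EuclideanSpace.basisFun (Fin d) ℂ).toMatrix_orthonormalBasis_self_mul_conjTranspose b
  have key : Matrix.trace (Bᴴ * Z * B) = Matrix.trace Z := by
    rw [Matrix.trace_mul_cycle, hBU, Matrix.one_mul]
  rw [← key, Matrix.trace]
  apply Finset.sum_congr rfl
  intro j _
  rw [ip_eq, act, Equiv.apply_symm_apply]
  simp only [Matrix.diag_apply, Matrix.mul_apply, Matrix.conjTranspose_apply, dotProduct,
    Matrix.mulVec, dotProduct, Pi.star_apply, fE_apply, hBapp]
  simp_rw [Finset.sum_mul, Finset.mul_sum]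
  rw [Finset.sum_comm]
  apply Finset.sum_congr rfl
  intro i _
  apply Finset.sum_congr rfl
  intro k _
  ring

/-- Existence of a unit vector orthogonal to `p` spanning `z` together with `p`. -/
lemma exists_perp_decomp (hd : 2 ≤ d) (p z : E d) (hp : ‖p‖ = 1) :
    ∃ (φ : E d) (σ : ℝ), ‖φ‖ = 1 ∧ ⟪p, φ⟫ = 0 ∧ 0 ≤ σ ∧
      z = (⟪p, z⟫ : ℂ) • p + (σ : ℂ) • φ := by
  classical
  set i0 : Fin d := ⟨0, by omega⟩
  set i1 : Fin d := ⟨1, by omega⟩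
  have hne : i0 ≠ i1 := by simp [i0, i1, Fin.ext_iff]
  set a : ℂ := ⟪p, z⟫ with ha
  set r : E d := z - a • p with hr
  have hpp : ⟪p, p⟫ = 1 := by
    rw [inner_self_eq_norm_sq_to_K, hp]; norm_num
  have hpr : ⟪p, r⟫ = 0 := by
    rw [hr, inner_sub_right, inner_smul_right, hpp, mul_one, ha, sub_self]
  by_cases hr0 : r = 0
  · -- z = a • p; pick any unit vector orthogonal to p
    have hcard : Module.finrank ℂ (E d) = Fintype.card (Fin d) := finrank_euclideanSpace
    have horth : Orthonormal ℂ (Set.restrict {i0} (fun _ => p)) := by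
      rw [orthonormal_iff_ite]
      rintro ⟨i, hi⟩ ⟨j, hj⟩
      simp only [Set.mem_singleton_iff] at hi hj
      subst hi; subst hj
      simp [Set.restrict, hpp, hp]
    obtain ⟨b, hb⟩ := horth.exists_orthonormalBasis_extension_of_card_eq hcard
    have hb0 : b i0 = p := hb i0 rfl
    refine ⟨b i1, 0, b.orthonormal.1 i1, ?_, le_refl 0, ?_⟩
    · rw [← hb0]
      exact b.orthonormal.2 hne
    · have hz : z = a • p := by
        have := sub_eq_zero.mp hr0
        rw [this]
      rw [hz]
      simp
  · refine ⟨((‖r‖⁻¹ : ℝ) : ℂ) • r, ‖r‖, ?_, ?_, norm_nonneg r, ?_⟩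
    · rw [norm_smul]
      simp [norm_ne_zero_iff.mpr hr0]
    · rw [inner_smul_right, hpr, mul_zero]
    · rw [smul_smul, ← Complex.ofReal_mul, mul_inv_cancel₀ (norm_ne_zero_iff.mpr hr0)]
      simp [hr]

lemma norm_fE_symm_one (x : Fin d → ℂ) (h : star x ⬝ᵥ x = 1) :
    ‖(fE.symm x : E d)‖ = 1 := by
  rw [@norm_eq_sqrt_re_inner ℂ, ip_eq, Equiv.apply_symm_apply, h]
  simp

lemma abs_inner_le_one (x y : E d) (hx : ‖x‖ = 1) (hy : ‖y‖ = 1) :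
    ‖⟪x, y⟫‖ ≤ 1 := by
  have := norm_inner_le_norm (𝕜 := ℂ) x y
  rw [hx, hy] at this
  simpa using this

set_option maxHeartbeats 800000 in
lemma abs_trace_le (hd : 2 ≤ d) (Z : Matrix (Fin d) (Fin d) ℂ) (hZ : Zᴴ * Z = 1)
    (ψ : Fin d → ℂ) (hψ : star ψ ⬝ᵥ ψ = 1) :
    ‖Matrix.trace Z‖
      ≤ ((d : ℝ) - 2) + 2 * ‖star ψ ⬝ᵥ Z.mulVec ψ‖ := by
  classical
  set i0 : Fin d := ⟨0, by omega⟩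
  set i1 : Fin d := ⟨1, by omega⟩
  have hne : i0 ≠ i1 := by simp [i0, i1, Fin.ext_iff]
  set p : E d := fE.symm ψ with hpdef
  have hp : ‖p‖ = 1 := norm_fE_symm_one ψ hψ
  have hpp : ⟪p, p⟫ = 1 := by rw [inner_self_eq_norm_sq_to_K, hp]; norm_num
  set z : E d := act Z p with hzdef
  have haval : ⟪p, z⟫ = star ψ ⬝ᵥ Z.mulVec ψ := by
    simp only [hzdef, act, hpdef, ip_eq, Equiv.apply_symm_apply]
  set a : ℂ := ⟪p, z⟫ with ha
  obtain ⟨φ, σ, hφ1, hpφ, hσ0, hdec⟩ := exists_perp_decomp hd p z hp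
  rw [← ha] at hdec
  have hφp : ⟪φ, p⟫ = 0 := inner_eq_zero_symm.mp hpφ
  have hφφ : ⟪φ, φ⟫ = 1 := by rw [inner_self_eq_norm_sq_to_K, hφ1]; norm_num
  -- build ONB with b i0 = p, b i1 = φ
  have hcard : Module.finrank ℂ (E d) = Fintype.card (Fin d) := finrank_euclideanSpace
  set v : Fin d → (E d) := fun i => if i = i0 then p else φ with hv
  have horth : Orthonormal ℂ (Set.restrict {i0, i1} v) := by
    rw [orthonormal_iff_ite]
    rintro ⟨i, hi⟩ ⟨j, hj⟩
    simp only [Set.mem_insert_iff, Set.mem_singleton_iff] at hi hj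
    rcases hi with rfl | rfl <;> rcases hj with rfl | rfl <;>
      simp [Set.restrict, hv, hne, hne.symm, hpp, hφφ, hp, hφ1, hpφ, hφp, Subtype.ext_iff]
  obtain ⟨b, hb⟩ := horth.exists_orthonormalBasis_extension_of_card_eq hcard
  have hb0 : b i0 = p := by
    have h := hb i0 (by simp)
    rw [h]
    simp [hv]
  have hb1 : b i1 = φ := by
    have h := hb i1 (by simp)
    rw [h]
    simp [hv, hne.symm]
  set T : Fin d → ℂ := fun j => ⟪b j, act Z (b j)⟫ with hT
  have htrace : Matrix.trace Z = ∑ j, T j := trace_eq_sum_inner Z b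
  have hT0 : T i0 = a := by
    simp only [hT]
    rw [hb0]
  have hTle : ∀ j, ‖T j‖ ≤ 1 := by
    intro j
    apply abs_inner_le_one _ _ (b.orthonormal.1 j)
    rw [act_norm Z hZ]
    exact b.orthonormal.1 j
  -- the 2x2 block argument
  set w : E d := act Z φ with hwdef
  have hw1 : ‖w‖ = 1 := by rw [hwdef, act_norm Z hZ]; exact hφ1
  set bb : ℂ := ⟪p, w⟫ with hbb
  set t : ℂ := ⟪φ, w⟫ with htt
  have hzw : ⟪z, w⟫ = 0 := by rw [hzdef, hwdef, act_inner Z hZ]; exact hpφ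
  have heq : starRingEnd ℂ a * bb + (σ : ℂ) * t = 0 := by
    rw [← hzw, hdec]
    rw [inner_add_left, inner_smul_left, inner_smul_left]
    rw [Complex.conj_ofReal]
  have habs : ‖a‖ * ‖bb‖ = σ * ‖t‖ := by
    have h3 : starRingEnd ℂ a * bb = -((σ : ℂ) * t) := by linear_combination heq
    have h4 := congrArg (‖·‖) h3
    simp only [norm_mul, norm_neg, Complex.norm_conj, Complex.norm_real, Real.norm_eq_abs,
      _root_.abs_of_nonneg hσ0] at h4
    exact h4
  have h1 : ‖a‖ ^ 2 + σ ^ 2 = 1 := by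
    have hz1 : ⟪z, z⟫ = 1 := by rw [hzdef, act_inner Z hZ]; exact hpp
    rw [hdec] at hz1
    simp only [inner_add_left, inner_add_right, inner_smul_left, inner_smul_right,
      hpp, hpφ, hφp, hφφ, mul_zero, zero_add, add_zero, mul_one, Complex.conj_ofReal] at hz1
    have e1 : a * starRingEnd ℂ a = ((‖a‖ ^ 2 : ℝ) : ℂ) := by
      rw [Complex.mul_conj, Complex.normSq_eq_norm_sq]
    rw [e1] at hz1
    have e2 : ((‖a‖ ^ 2 + σ ^ 2 : ℝ) : ℂ) = 1 := by
      push_cast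
      rw [← hz1]
      push_cast
      ring
    exact_mod_cast e2
  have h2 : ‖bb‖ ^ 2 + ‖t‖ ^ 2 ≤ 1 := by
    have hpar := b.sum_inner_mul_inner w w
    have hterm : ∀ j, ⟪w, b j⟫ * ⟪b j, w⟫ = ((‖⟪b j, w⟫‖ ^ 2 : ℝ) : ℂ) := by
      intro j
      have hcon : ⟪w, b j⟫ = starRingEnd ℂ ⟪b j, w⟫ := by rw [inner_conj_symm]
      rw [hcon, ← Complex.normSq_eq_conj_mul_self, Complex.sq_norm]
    have hww : ⟪w, w⟫ = 1 := by rw [inner_self_eq_norm_sq_to_K, hw1]; norm_num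
    rw [hww] at hpar
    simp_rw [hterm] at hpar
    have hpar' : ∑ j, ‖⟪b j, w⟫‖ ^ 2 = 1 := by exact_mod_cast hpar
    have hle : ∑ j ∈ ({i0, i1} : Finset (Fin d)), ‖⟪b j, w⟫‖ ^ 2
        ≤ ∑ j, ‖⟪b j, w⟫‖ ^ 2 :=
      Finset.sum_le_univ_sum_of_nonneg (fun j => sq_nonneg _)
    rw [Finset.sum_pair hne, hb0, hb1] at hle
    rw [hpar'] at hle
    exact hle
  have hT1 : ‖T i1‖ ≤ ‖a‖ := by
    have hTi1 : T i1 = t := by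
      simp only [hT]
      rw [hb1]
    rw [hTi1]
    have habs2 : (σ * ‖t‖) ^ 2 = (‖a‖ * ‖bb‖) ^ 2 := by
      rw [habs]
    have hmul := mul_le_mul_of_nonneg_left h2 (sq_nonneg (‖a‖))
    have key : ‖t‖ ^ 2 ≤ ‖a‖ ^ 2 := by nlinarith [habs2, h1, hmul]
    nlinarith [key, norm_nonneg a, norm_nonneg t]
  -- assemble
  have hsum : ‖Matrix.trace Z‖ ≤ ∑ j, ‖T j‖ := by
    rw [htrace]
    refine (norm_sum_le _ _).trans (le_of_eq ?_)
    exact Finset.sum_congr rfl fun j _ => rfl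
  have hsplit : ∑ j, ‖T j‖
      = (∑ j ∈ Finset.univ \ ({i0, i1} : Finset (Fin d)), ‖T j‖)
        + (‖T i0‖ + ‖T i1‖) := by
    rw [← Finset.sum_pair (f := fun j => ‖T j‖) hne,
      Finset.sum_sdiff (Finset.subset_univ _)]
  have hrest : ∑ j ∈ Finset.univ \ ({i0, i1} : Finset (Fin d)), ‖T j‖
      ≤ ((d : ℝ) - 2) := by
    have hcard2 : (Finset.univ \ ({i0, i1} : Finset (Fin d))).card = d - 2 := by
      rw [Finset.card_sdiff_of_subset (Finset.subset_univ _), Finset.card_pair hne, Finset.card_univ,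
        Fintype.card_fin]
    calc ∑ j ∈ Finset.univ \ ({i0, i1} : Finset (Fin d)), ‖T j‖
        ≤ ∑ j ∈ Finset.univ \ ({i0, i1} : Finset (Fin d)), 1 :=
          Finset.sum_le_sum (fun j _ => hTle j)
      _ = ((d - 2 : ℕ) : ℝ) := by rw [Finset.sum_const, hcard2]; simp
      _ = (d : ℝ) - 2 := by
          have : (2 : ℕ) ≤ d := hd
          push_cast [Nat.cast_sub this]
          ring
  have hA : ‖a‖ = ‖star ψ ⬝ᵥ Z.mulVec ψ‖ := congrArg (‖·‖) haval
  calc ‖Matrix.trace Z‖ ≤ ∑ j, ‖T j‖ := hsum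
    _ = (∑ j ∈ Finset.univ \ ({i0, i1} : Finset (Fin d)), ‖T j‖)
        + (‖T i0‖ + ‖T i1‖) := hsplit
    _ ≤ ((d : ℝ) - 2) + (‖a‖ + ‖a‖) := by
        apply add_le_add hrest
        apply add_le_add _ hT1
        rw [hT0]
    _ = ((d : ℝ) - 2) + 2 * ‖star ψ ⬝ᵥ Z.mulVec ψ‖ := by rw [hA]; ring

lemma inner_self_one {p : EuclideanSpace ℂ (Fin d)} (hp : ‖p‖ = 1) : ⟪p, p⟫ = (1 : ℂ) := by
  rw [inner_self_eq_norm_sq_to_K, hp]; norm_num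

lemma overlap_le (p u v : E d) (hp : ‖p‖ = 1) (hu : ‖u‖ = 1) (hv : ‖v‖ = 1) :
    ‖⟪u, v⟫‖ ≤ ‖⟪p, u⟫‖ * ‖⟪p, v⟫‖
      + Real.sqrt (1 - ‖⟪p, u⟫‖ ^ 2) * Real.sqrt (1 - ‖⟪p, v⟫‖ ^ 2) := by
  set a : ℂ := ⟪p, u⟫ with ha
  set c : ℂ := ⟪p, v⟫ with hc
  have hpp : ⟪p, p⟫ = 1 := inner_self_one hp
  have huu : ⟪u, u⟫ = 1 := inner_self_one hu
  have hvv : ⟪v, v⟫ = 1 := inner_self_one hv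
  set u' : E d := u - a • p with hu'
  set v' : E d := v - c • p with hv'
  have hup : ⟪u, p⟫ = starRingEnd ℂ a := by rw [ha, inner_conj_symm]
  have hvp : ⟪v, p⟫ = starRingEnd ℂ c := by rw [hc, inner_conj_symm]
  have hperp : ∀ (w : E d) (b : ℂ), ⟪w, w⟫ = 1 → ⟪p, w⟫ = b → ⟪w, p⟫ = starRingEnd ℂ b →
      ⟪w - b • p, w - b • p⟫ = 1 - ((‖b‖ ^ 2 : ℝ) : ℂ) := by
    intro w b hww hbw hwb
    simp only [inner_sub_left, inner_sub_right, inner_smul_left, inner_smul_right, hpp,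
      mul_one, hww, hbw, hwb]
    have hb2 : b * starRingEnd ℂ b = ((‖b‖ ^ 2 : ℝ) : ℂ) := by
      rw [Complex.mul_conj, Complex.normSq_eq_norm_sq]
    linear_combination -hb2
  have hnorm : ∀ (w : E d) (b : ℂ), ⟪w - b • p, w - b • p⟫ = 1 - ((‖b‖ ^ 2 : ℝ) : ℂ) →
      ‖w - b • p‖ = Real.sqrt (1 - ‖b‖ ^ 2) := by
    intro w b hh
    rw [@norm_eq_sqrt_re_inner ℂ, hh]
    congr 1
  have hnu : ‖u'‖ = Real.sqrt (1 - ‖a‖ ^ 2) := hnorm u a (hperp u a huu ha.symm hup)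
  have hnv : ‖v'‖ = Real.sqrt (1 - ‖c‖ ^ 2) := hnorm v c (hperp v c hvv hc.symm hvp)
  have hid : ⟪u, v⟫ = starRingEnd ℂ a * c + ⟪u', v'⟫ := by
    rw [hu', hv']
    simp only [inner_sub_left, inner_sub_right, inner_smul_left, inner_smul_right, hpp,
      mul_one, hup]
    linear_combination -(starRingEnd ℂ a) * hc
  calc ‖⟪u, v⟫‖ = ‖starRingEnd ℂ a * c + ⟪u', v'⟫‖ := by rw [← hid]
    _ ≤ ‖starRingEnd ℂ a * c‖ + ‖⟪u', v'⟫‖ := norm_add_le _ _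
    _ ≤ ‖a‖ * ‖c‖ + ‖u'‖ * ‖v'‖ := by
        rw [norm_mul, Complex.norm_conj]
        have := norm_inner_le_norm (𝕜 := ℂ) u' v'
        exact add_le_add_right this _
    _ = ‖a‖ * ‖c‖
        + Real.sqrt (1 - ‖a‖ ^ 2) * Real.sqrt (1 - ‖c‖ ^ 2) := by
        rw [hnu, hnv]

lemma vmv_mul (x y z w : Fin d → ℂ) :
    Matrix.vecMulVec x y * Matrix.vecMulVec z w = (y ⬝ᵥ z) • Matrix.vecMulVec x w := by
  ext i j
  simp only [Matrix.mul_apply, Matrix.vecMulVec_apply, Matrix.smul_apply, dotProduct,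
    smul_eq_mul, Finset.sum_mul]
  exact Finset.sum_congr rfl fun k _ => by ring

lemma vmv_conjT (x y : Fin d → ℂ) :
    (Matrix.vecMulVec x (star y))ᴴ = Matrix.vecMulVec y (star x) := by
  ext i j
  simp only [Matrix.conjTranspose_apply, Matrix.vecMulVec_apply, Pi.star_apply, star_mul',
    star_star]
  ring

lemma vmv_trace (x y : Fin d → ℂ) : Matrix.trace (Matrix.vecMulVec x y) = y ⬝ᵥ x := by
  simp only [Matrix.trace, Matrix.diag_apply, Matrix.vecMulVec_apply, dotProduct]
  apply Finset.sum_congr rfl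
  intro k _
  ring

lemma vmv_mulVec (x y v : Fin d → ℂ) :
    (Matrix.vecMulVec x y).mulVec v = (y ⬝ᵥ v) • x := by
  ext i
  simp only [Matrix.mulVec, Matrix.vecMulVec_apply, dotProduct, Pi.smul_apply, smul_eq_mul,
    Finset.sum_mul]
  exact Finset.sum_congr rfl fun k _ => by ring

section Rotation

variable (ψ1 χ : Fin d → ℂ) (δ : ℝ)

/-- rank-2 rotation by angle δ in the plane spanned by orthonormal ψ1, χ. -/
noncomputable def rotS (ψ1 χ : Fin d → ℂ) (δ : ℝ) : Matrix (Fin d) (Fin d) ℂ :=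
  1 + (((Real.cos δ : ℝ) : ℂ) - 1) •
      (Matrix.vecMulVec ψ1 (star ψ1) + Matrix.vecMulVec χ (star χ))
    + ((Real.sin δ : ℝ) : ℂ) •
      (Matrix.vecMulVec χ (star ψ1) - Matrix.vecMulVec ψ1 (star χ))

lemma rotS_conjTranspose :
    (rotS ψ1 χ δ)ᴴ = 1 + (((Real.cos δ : ℝ) : ℂ) - 1) •
      (Matrix.vecMulVec ψ1 (star ψ1) + Matrix.vecMulVec χ (star χ))
    - ((Real.sin δ : ℝ) : ℂ) •
      (Matrix.vecMulVec χ (star ψ1) - Matrix.vecMulVec ψ1 (star χ)) := by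
  rw [rotS]
  simp only [Matrix.conjTranspose_add, Matrix.conjTranspose_sub, Matrix.conjTranspose_smul,
    Matrix.conjTranspose_one, vmv_conjT]
  rw [show star ((((Real.cos δ : ℝ) : ℂ)) - 1) = (((Real.cos δ : ℝ) : ℂ)) - 1 from by
      rw [star_sub, star_one, Complex.star_def, Complex.conj_ofReal],
    show star (((Real.sin δ : ℝ) : ℂ)) = (((Real.sin δ : ℝ) : ℂ)) from by
      rw [Complex.star_def, Complex.conj_ofReal]]
  module

variable (h11 : star ψ1 ⬝ᵥ ψ1 = 1) (hcc : star χ ⬝ᵥ χ = 1)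
  (h1c : star ψ1 ⬝ᵥ χ = 0) (hc1 : star χ ⬝ᵥ ψ1 = 0)

include h11 hcc h1c hc1 in
lemma rotS_unitary : (rotS ψ1 χ δ)ᴴ * rotS ψ1 χ δ = 1 := by
  have hAA : Matrix.vecMulVec ψ1 (star ψ1) * Matrix.vecMulVec ψ1 (star ψ1)
      = Matrix.vecMulVec ψ1 (star ψ1) := by rw [vmv_mul, h11, one_smul]
  have hAB : Matrix.vecMulVec ψ1 (star ψ1) * Matrix.vecMulVec χ (star χ) = 0 := by
    rw [vmv_mul, h1c, zero_smul]
  have hBA : Matrix.vecMulVec χ (star χ) * Matrix.vecMulVec ψ1 (star ψ1) = 0 := by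
    rw [vmv_mul, hc1, zero_smul]
  have hBB : Matrix.vecMulVec χ (star χ) * Matrix.vecMulVec χ (star χ)
      = Matrix.vecMulVec χ (star χ) := by rw [vmv_mul, hcc, one_smul]
  have hCC : Matrix.vecMulVec χ (star ψ1) * Matrix.vecMulVec χ (star ψ1) = 0 := by
    rw [vmv_mul, h1c, zero_smul]
  have hCD : Matrix.vecMulVec χ (star ψ1) * Matrix.vecMulVec ψ1 (star χ)
      = Matrix.vecMulVec χ (star χ) := by rw [vmv_mul, h11, one_smul]
  have hDC : Matrix.vecMulVec ψ1 (star χ) * Matrix.vecMulVec χ (star ψ1)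
      = Matrix.vecMulVec ψ1 (star ψ1) := by rw [vmv_mul, hcc, one_smul]
  have hDD : Matrix.vecMulVec ψ1 (star χ) * Matrix.vecMulVec ψ1 (star χ) = 0 := by
    rw [vmv_mul, hc1, zero_smul]
  have hAC : Matrix.vecMulVec ψ1 (star ψ1) * Matrix.vecMulVec χ (star ψ1) = 0 := by
    rw [vmv_mul, h1c, zero_smul]
  have hCA : Matrix.vecMulVec χ (star ψ1) * Matrix.vecMulVec ψ1 (star ψ1)
      = Matrix.vecMulVec χ (star ψ1) := by rw [vmv_mul, h11, one_smul]
  have hAD : Matrix.vecMulVec ψ1 (star ψ1) * Matrix.vecMulVec ψ1 (star χ)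
      = Matrix.vecMulVec ψ1 (star χ) := by rw [vmv_mul, h11, one_smul]
  have hDA : Matrix.vecMulVec ψ1 (star χ) * Matrix.vecMulVec ψ1 (star ψ1) = 0 := by
    rw [vmv_mul, hc1, zero_smul]
  have hBC : Matrix.vecMulVec χ (star χ) * Matrix.vecMulVec χ (star ψ1)
      = Matrix.vecMulVec χ (star ψ1) := by rw [vmv_mul, hcc, one_smul]
  have hCB : Matrix.vecMulVec χ (star ψ1) * Matrix.vecMulVec χ (star χ) = 0 := by
    rw [vmv_mul, h1c, zero_smul]
  have hBD : Matrix.vecMulVec χ (star χ) * Matrix.vecMulVec ψ1 (star χ) = 0 := by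
    rw [vmv_mul, hc1, zero_smul]
  have hDB : Matrix.vecMulVec ψ1 (star χ) * Matrix.vecMulVec χ (star χ)
      = Matrix.vecMulVec ψ1 (star χ) := by rw [vmv_mul, hcc, one_smul]
  have trig : (((Real.cos δ : ℝ) : ℂ)) ^ 2 + (((Real.sin δ : ℝ) : ℂ)) ^ 2 = 1 := by
    norm_cast
    exact Real.cos_sq_add_sin_sq δ
  rw [rotS_conjTranspose, rotS]
  simp only [add_mul, mul_add, sub_mul, mul_sub, one_mul, mul_one, Matrix.smul_mul,
    Matrix.mul_smul, smul_smul, smul_add, smul_sub, hAA, hAB, hBA, hBB, hCC, hCD, hDC, hDD,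
    hAC, hCA, hAD, hDA, hBC, hCB, hBD, hDB, smul_zero, add_zero, zero_add, sub_zero, zero_sub,
    smul_neg]
  match_scalars <;>
    first
      | ring1
      | linear_combination trig
      | linear_combination Complex.cos_sq_add_sin_sq (δ : ℂ)
      | linear_combination (Complex.cos_sq_add_sin_sq (δ : ℂ)) - trig
      | linear_combination trig - Complex.cos_sq_add_sin_sq (δ : ℂ)

include h11 hcc h1c hc1 in
lemma rotS_trace :
    Matrix.trace (rotS ψ1 χ δ) = (d : ℂ) + 2 * (((Real.cos δ : ℝ) : ℂ) - 1) := by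
  rw [rotS]
  simp only [Matrix.trace_add, Matrix.trace_sub, Matrix.trace_smul, Matrix.trace_one,
    vmv_trace, h11, hcc, h1c, hc1, Fintype.card_fin]
  simp only [smul_eq_mul]
  ring

include h11 hcc h1c hc1 in
lemma rotS_mulVec (c1 s1 : ℝ) :
    (rotS ψ1 χ δ).mulVec ((c1 : ℂ) • ψ1 + (s1 : ℂ) • χ)
      = ((c1 * Real.cos δ - s1 * Real.sin δ : ℝ) : ℂ) • ψ1
        + ((s1 * Real.cos δ + c1 * Real.sin δ : ℝ) : ℂ) • χ := by
  have hv1 : star ψ1 ⬝ᵥ ((c1 : ℂ) • ψ1 + (s1 : ℂ) • χ) = (c1 : ℂ) := by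
    rw [dotProduct_add, dotProduct_smul, dotProduct_smul, h11, h1c]
    simp
  have hv2 : star χ ⬝ᵥ ((c1 : ℂ) • ψ1 + (s1 : ℂ) • χ) = (s1 : ℂ) := by
    rw [dotProduct_add, dotProduct_smul, dotProduct_smul, hcc, hc1]
    simp
  rw [rotS]
  rw [Matrix.add_mulVec, Matrix.add_mulVec, Matrix.one_mulVec, Matrix.smul_mulVec,
    Matrix.smul_mulVec, Matrix.add_mulVec, Matrix.sub_mulVec, vmv_mulVec, vmv_mulVec,
    vmv_mulVec, vmv_mulVec, hv1, hv2]
  match_scalars <;> push_cast <;> ring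

end Rotation

set_option maxHeartbeats 1600000 in
theorem min_dist_fixed_fidelity_separable {d : ℕ} (hd : 2 ≤ d)
    (U V : Matrix (Fin d) (Fin d) ℂ)
    (hU : U ∈ Matrix.unitaryGroup (Fin d) ℂ)
    (hV : V ∈ Matrix.unitaryGroup (Fin d) ℂ)
    (ψ : Fin d → ℂ) (hψ : star ψ ⬝ᵥ ψ = 1)
    (fV : ℝ) (hfV : fV = ‖star ψ ⬝ᵥ (Uᴴ * V).mulVec ψ‖ ^ 2)
    (fW : ℝ) (hfW0 : 0 ≤ fW) (hfW1 : fW ≤ 1)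
    (γV γW : ℝ) (hγV : γV = Real.arccos (Real.sqrt fV))
    (hγW : γW = Real.arccos (Real.sqrt fW)) :
    IsLeast {r : ℝ | ∃ W ∈ Matrix.unitaryGroup (Fin d) ℂ,
        ‖star ψ ⬝ᵥ (Uᴴ * W).mulVec ψ‖ ^ 2 = fW ∧ r = phaseDist V W}
      (Real.sqrt (4 * (1 - Real.sqrt (fV * fW) - Real.sqrt ((1 - fV) * (1 - fW)))))
    ∧ Real.sqrt (4 * (1 - Real.sqrt (fV * fW) - Real.sqrt ((1 - fV) * (1 - fW))))
      = Real.sqrt (4 * (1 - Real.cos (γV - γW))) := by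
  classical
  -- unitarity facts
  have hU1 : Uᴴ * U = 1 := by
    rw [← Matrix.star_eq_conjTranspose]; exact hU.1
  have hU2 : U * Uᴴ = 1 := by
    rw [← Matrix.star_eq_conjTranspose]; exact hU.2
  have hV1 : Vᴴ * V = 1 := by
    rw [← Matrix.star_eq_conjTranspose]; exact hV.1
  have hV2 : V * Vᴴ = 1 := by
    rw [← Matrix.star_eq_conjTranspose]; exact hV.2
  set Y : Matrix (Fin d) (Fin d) ℂ := Uᴴ * V with hYdef
  have hY1 : Yᴴ * Y = 1 := by
    rw [hYdef, Matrix.conjTranspose_mul, Matrix.conjTranspose_conjTranspose,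
      Matrix.mul_assoc, ← Matrix.mul_assoc U Uᴴ V, hU2, Matrix.one_mul, hV1]
  set α : ℂ := star ψ ⬝ᵥ Y.mulVec ψ with hα
  have hYψdot : star (Y.mulVec ψ) ⬝ᵥ (Y.mulVec ψ) = 1 := by
    rw [unitary_dot Y hY1, hψ]
  have hfV0 : 0 ≤ fV := by rw [hfV]; positivity
  have habsα : ‖α‖ ≤ 1 := by
    have hp : ‖(fE.symm ψ : EuclideanSpace ℂ (Fin d))‖ = 1 := norm_fE_symm_one ψ hψ
    have hu : ‖(fE.symm (Y.mulVec ψ) : EuclideanSpace ℂ (Fin d))‖ = 1 :=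
      norm_fE_symm_one _ hYψdot
    have h := abs_inner_le_one (fE.symm ψ) (fE.symm (Y.mulVec ψ)) hp hu
    rwa [ip_eq, Equiv.apply_symm_apply, Equiv.apply_symm_apply] at h
  have hfV1 : fV ≤ 1 := by
    rw [hfV]
    nlinarith [norm_nonneg α]
  have hsqfV : Real.sqrt fV ≤ 1 := by
    rw [show (1:ℝ) = Real.sqrt 1 from (Real.sqrt_one).symm]
    exact Real.sqrt_le_sqrt hfV1
  have hsqfW : Real.sqrt fW ≤ 1 := by
    rw [show (1:ℝ) = Real.sqrt 1 from (Real.sqrt_one).symm]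
    exact Real.sqrt_le_sqrt hfW1
  have cosV : Real.cos γV = Real.sqrt fV := by
    rw [hγV]; exact Real.cos_arccos (le_trans (by norm_num) (Real.sqrt_nonneg fV)) hsqfV
  have cosW : Real.cos γW = Real.sqrt fW := by
    rw [hγW]; exact Real.cos_arccos (le_trans (by norm_num) (Real.sqrt_nonneg fW)) hsqfW
  have sinV : Real.sin γV = Real.sqrt (1 - fV) := by
    rw [hγV, Real.sin_arccos, Real.sq_sqrt hfV0]
  have sinW : Real.sin γW = Real.sqrt (1 - fW) := by
    rw [hγW, Real.sin_arccos, Real.sq_sqrt hfW0]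
  have hαcos : ‖α‖ = Real.cos γV := by
    rw [cosV, hfV]
    exact (Real.sqrt_sq (norm_nonneg α)).symm
  have hγV0 : 0 ≤ γV := hγV ▸ Real.arccos_nonneg _
  have hγW0 : 0 ≤ γW := hγW ▸ Real.arccos_nonneg _
  have hγVle : γV ≤ Real.pi / 2 := by
    rw [hγV]; exact Real.arccos_le_pi_div_two.mpr (Real.sqrt_nonneg fV)
  have hγWle : γW ≤ Real.pi / 2 := by
    rw [hγW]; exact Real.arccos_le_pi_div_two.mpr (Real.sqrt_nonneg fW)
  have hcosΔ0 : 0 ≤ Real.cos (γV - γW) := by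
    apply Real.cos_nonneg_of_mem_Icc
    constructor <;> [linarith; linarith]
  have hid : 1 - Real.sqrt (fV * fW) - Real.sqrt ((1 - fV) * (1 - fW))
      = 1 - Real.cos (γV - γW) := by
    rw [Real.cos_sub, cosV, cosW, sinV, sinW, Real.sqrt_mul hfV0,
      Real.sqrt_mul (by linarith : (0:ℝ) ≤ 1 - fV)]
    ring
  have hmain : (Real.sqrt (4 * (1 - Real.sqrt (fV * fW) - Real.sqrt ((1 - fV) * (1 - fW)))))
      = Real.sqrt (4 * (1 - Real.cos (γV - γW))) := by rw [hid]
  refine ⟨⟨?_, ?_⟩, hmain⟩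
  · -- membership : construction of the optimal W
    set p : EuclideanSpace ℂ (Fin d) := fE.symm ψ with hpdef
    have hp : ‖p‖ = 1 := norm_fE_symm_one ψ hψ
    set z : EuclideanSpace ℂ (Fin d) := fE.symm (Y.mulVec ψ) with hzdef
    have hpz : ⟪p, z⟫ = α := by
      rw [ip_eq, hpdef, hzdef]
      simp only [Equiv.apply_symm_apply, hα]
    obtain ⟨φ, σ, hφ1, hpφ, hσ0, hdec⟩ := exists_perp_decomp hd p z hp
    rw [hpz] at hdec
    have hpp : ⟪p, p⟫ = 1 := inner_self_one hp
    have hφφ : ⟪φ, φ⟫ = 1 := inner_self_one hφ1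
    have hφp : ⟪φ, p⟫ = 0 := inner_eq_zero_symm.mp hpφ
    have hzz : ⟪z, z⟫ = 1 := by
      rw [ip_eq, hzdef]
      simp only [Equiv.apply_symm_apply]
      exact hYψdot
    have h1 : ‖α‖ ^ 2 + σ ^ 2 = 1 := by
      rw [hdec] at hzz
      simp only [inner_add_left, inner_add_right, inner_smul_left, inner_smul_right, hpp, hpφ,
        hφp, hφφ, mul_zero, zero_add, add_zero, mul_one, Complex.conj_ofReal] at hzz
      have e1 : α * starRingEnd ℂ α = ((‖α‖ ^ 2 : ℝ) : ℂ) := by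
        rw [Complex.mul_conj, Complex.normSq_eq_norm_sq]
      rw [e1] at hzz
      have e2 : ((‖α‖ ^ 2 + σ ^ 2 : ℝ) : ℂ) = 1 := by
        push_cast
        rw [← hzz]
        push_cast
        ring
      exact_mod_cast e2
    have hσ : σ = Real.sin γV := by
      have hsin0 : 0 ≤ Real.sin γV := by
        apply Real.sin_nonneg_of_nonneg_of_le_pi hγV0
        linarith [Real.pi_pos]
      have hσ2 : σ ^ 2 = Real.sin γV ^ 2 := by
        have hc := Real.sin_sq_add_cos_sq γV
        nlinarith [h1, hc, hαcos]
      calc σ = Real.sqrt (σ ^ 2) := (Real.sqrt_sq hσ0).symm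
        _ = Real.sqrt (Real.sin γV ^ 2) := by rw [hσ2]
        _ = Real.sin γV := Real.sqrt_sq hsin0
    set μ : ℂ := if α = 0 then 1 else α / (‖α‖ : ℂ) with hμ
    have hμ1 : ‖μ‖ = 1 := by
      rw [hμ]
      split_ifs with h0
      · simp
      · rw [norm_div, Complex.norm_real, Real.norm_eq_abs, _root_.abs_of_nonneg (norm_nonneg α),
          div_self (norm_ne_zero_iff.mpr h0)]
    have hμα : α = ((Real.cos γV : ℝ) : ℂ) * μ := by
      rw [hμ]
      split_ifs with h0
      · have hc0 : Real.cos γV = 0 := by rw [← hαcos, h0]; simp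
        rw [h0, hc0]
        simp
      · rw [← hαcos]
        have hne : ((‖α‖ : ℝ) : ℂ) ≠ 0 :=
          Complex.ofReal_ne_zero.mpr (norm_ne_zero_iff.mpr h0)
        field_simp
    set ψ1 : Fin d → ℂ := μ • ψ with hψ1def
    set χ : Fin d → ℂ := fE φ with hχdef
    have hμμ : starRingEnd ℂ μ * μ = 1 := by
      rw [mul_comm, Complex.mul_conj, Complex.normSq_eq_norm_sq, hμ1]
      norm_num
    have h11 : star ψ1 ⬝ᵥ ψ1 = 1 := by
      rw [hψ1def, star_smul, smul_dotProduct, dotProduct_smul, hψ]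
      simp only [smul_eq_mul, mul_one]
      exact hμμ
    have hpχ : star ψ ⬝ᵥ χ = 0 := by
      have h := hpφ
      rw [ip_eq, hpdef] at h
      simp only [Equiv.apply_symm_apply] at h
      rw [hχdef]
      exact h
    have hχp : star χ ⬝ᵥ ψ = 0 := by
      have h := hφp
      rw [ip_eq, hpdef] at h
      simp only [Equiv.apply_symm_apply] at h
      rw [hχdef]
      exact h
    have hcc : star χ ⬝ᵥ χ = 1 := by
      have h := hφφ
      rw [ip_eq] at h
      rw [hχdef]
      exact h
    have h1c : star ψ1 ⬝ᵥ χ = 0 := by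
      rw [hψ1def, star_smul, smul_dotProduct, hpχ]
      simp
    have hc1 : star χ ⬝ᵥ ψ1 = 0 := by
      rw [hψ1def, dotProduct_smul, hχp]
      simp
    have hYψ : Y.mulVec ψ = ((Real.cos γV : ℝ) : ℂ) • ψ1 + ((Real.sin γV : ℝ) : ℂ) • χ := by
      have hfz : Y.mulVec ψ = fE z := by rw [hzdef, Equiv.apply_symm_apply]
      funext i
      have hzi := congrArg (fun w : EuclideanSpace ℂ (Fin d) => w i) hdec
      simp only [PiLp.add_apply, PiLp.smul_apply, smul_eq_mul] at hzi
      rw [hfz, fE_apply, hzi]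
      simp only [Pi.add_apply, Pi.smul_apply, smul_eq_mul, hψ1def, hχdef]
      have hpi : p i = ψ i := rfl
      have hχi : (fE φ) i = φ i := rfl
      rw [hpi, hχi, hμα, hσ]
      ring
    set δ : ℝ := γW - γV with hδ
    set S : Matrix (Fin d) (Fin d) ℂ := rotS ψ1 χ δ with hSdef
    have hS1 : Sᴴ * S = 1 := rotS_unitary ψ1 χ δ h11 hcc h1c hc1
    set W : Matrix (Fin d) (Fin d) ℂ := U * (S * Y) with hWdef
    have hW1 : Wᴴ * W = 1 := by
      rw [hWdef, Matrix.conjTranspose_mul, Matrix.mul_assoc,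
        ← Matrix.mul_assoc Uᴴ U (S * Y), hU1, Matrix.one_mul, Matrix.conjTranspose_mul,
        Matrix.mul_assoc, ← Matrix.mul_assoc Sᴴ S Y, hS1, Matrix.one_mul, hY1]
    have hWmem : W ∈ Matrix.unitaryGroup (Fin d) ℂ := by
      rw [Matrix.mem_unitaryGroup_iff', Matrix.star_eq_conjTranspose]
      exact hW1
    have hUW : Uᴴ * W = S * Y := by
      rw [hWdef, ← Matrix.mul_assoc, hU1, Matrix.one_mul]
    have e1 : Real.cos γV * Real.cos δ - Real.sin γV * Real.sin δ = Real.cos γW := by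
      rw [← Real.cos_add, show γV + δ = γW from by rw [hδ]; ring]
    have e2 : Real.sin γV * Real.cos δ + Real.cos γV * Real.sin δ = Real.sin γW := by
      rw [← Real.sin_add, show γV + δ = γW from by rw [hδ]; ring]
    have hXψ : (Uᴴ * W).mulVec ψ
        = ((Real.cos γW : ℝ) : ℂ) • ψ1 + ((Real.sin γW : ℝ) : ℂ) • χ := by
      rw [hUW, ← Matrix.mulVec_mulVec, hYψ, hSdef,
        rotS_mulVec ψ1 χ δ h11 hcc h1c hc1 (Real.cos γV) (Real.sin γV), e1, e2]
    have hfid : star ψ ⬝ᵥ (Uᴴ * W).mulVec ψ = ((Real.cos γW : ℝ) : ℂ) * μ := by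
      have hψψ1 : star ψ ⬝ᵥ ψ1 = μ := by
        rw [hψ1def, dotProduct_smul, hψ]
        simp
      rw [hXψ]
      simp only [dotProduct_add, dotProduct_smul, hpχ, hψψ1, smul_eq_mul, mul_zero, add_zero,
        mul_one]
    have hcosW0 : 0 ≤ Real.cos γW := by
      apply Real.cos_nonneg_of_mem_Icc
      constructor <;> [linarith [Real.pi_pos]; linarith]
    have hfid2 : ‖star ψ ⬝ᵥ (Uᴴ * W).mulVec ψ‖ ^ 2 = fW := by
      rw [hfid, norm_mul, hμ1, mul_one, Complex.norm_real, Real.norm_eq_abs,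
        _root_.abs_of_nonneg hcosW0, cosW, Real.sq_sqrt hfW0]
    have htrS : Matrix.trace (Vᴴ * W) = (d : ℂ) + 2 * (((Real.cos δ : ℝ) : ℂ) - 1) := by
      have hVW : Vᴴ * W = (Vᴴ * U) * S * (Uᴴ * V) := by
        rw [hWdef, hYdef]
        simp only [Matrix.mul_assoc]
      rw [hVW, Matrix.trace_mul_cycle]
      have h2 : (Uᴴ * V) * (Vᴴ * U) = 1 := by
        rw [Matrix.mul_assoc, ← Matrix.mul_assoc V Vᴴ U, hV2, Matrix.one_mul, hU1]
      rw [h2, Matrix.one_mul, hSdef]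
      exact rotS_trace ψ1 χ δ h11 hcc h1c hc1
    have hcosδ : Real.cos δ = Real.cos (γV - γW) := by
      rw [hδ, show γW - γV = -(γV - γW) from by ring, Real.cos_neg]
    have hdr : (2 : ℝ) ≤ (d : ℝ) := by exact_mod_cast hd
    have habs_tr : ‖Matrix.trace (Vᴴ * W)‖
        = (d : ℝ) - 2 + 2 * Real.cos (γV - γW) := by
      rw [htrS]
      have hcast : (d : ℂ) + 2 * (((Real.cos δ : ℝ) : ℂ) - 1)
          = (((d : ℝ) - 2 + 2 * Real.cos (γV - γW) : ℝ) : ℂ) := by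
        rw [← hcosδ]
        push_cast
        ring
      rw [hcast, Complex.norm_real, Real.norm_eq_abs, _root_.abs_of_nonneg (by linarith)]
    refine ⟨W, hWmem, hfid2, ?_⟩
    rw [phaseDist_eq V W hV1 hW1, habs_tr]
    congr 1
    rw [hid]
    ring
  · -- lower bound
    rintro r ⟨W', hW'U, hW'fid, rfl⟩
    rw [hmain]
    have hW1 : W'ᴴ * W' = 1 := by
      rw [← Matrix.star_eq_conjTranspose]; exact hW'U.1
    have hW2 : W' * W'ᴴ = 1 := by
      rw [← Matrix.star_eq_conjTranspose]; exact hW'U.2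
    set Z : Matrix (Fin d) (Fin d) ℂ := Vᴴ * W' with hZdef
    have hZ1 : Zᴴ * Z = 1 := by
      rw [hZdef, Matrix.conjTranspose_mul, Matrix.conjTranspose_conjTranspose,
        Matrix.mul_assoc, ← Matrix.mul_assoc V Vᴴ W', hV2, Matrix.one_mul, hW1]
    rw [phaseDist_eq V W' hV1 hW1]
    set X : Matrix (Fin d) (Fin d) ℂ := Uᴴ * W' with hXdef
    have hXψdot : star (X.mulVec ψ) ⬝ᵥ (X.mulVec ψ) = 1 := by
      have hX1 : Xᴴ * X = 1 := by
        rw [hXdef, Matrix.conjTranspose_mul, Matrix.conjTranspose_conjTranspose,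
          Matrix.mul_assoc, ← Matrix.mul_assoc U Uᴴ W', hU2, Matrix.one_mul, hW1]
      rw [unitary_dot X hX1, hψ]
    -- the constrained inner product
    have hYX : Yᴴ * X = Z := by
      rw [hYdef, hXdef, hZdef, Matrix.conjTranspose_mul, Matrix.conjTranspose_conjTranspose,
        Matrix.mul_assoc, ← Matrix.mul_assoc U Uᴴ W', hU2, Matrix.one_mul]
    have hc_eq : star (Y.mulVec ψ) ⬝ᵥ (X.mulVec ψ) = star ψ ⬝ᵥ Z.mulVec ψ := by
      rw [Matrix.star_mulVec, Matrix.dotProduct_mulVec, Matrix.vecMul_vecMul, hYX,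
        ← Matrix.dotProduct_mulVec]
    have hified : ‖star ψ ⬝ᵥ Z.mulVec ψ‖ ≤ Real.cos (γV - γW) := by
      have hp : ‖(fE.symm ψ : EuclideanSpace ℂ (Fin d))‖ = 1 := norm_fE_symm_one ψ hψ
      have hu : ‖(fE.symm (Y.mulVec ψ) : EuclideanSpace ℂ (Fin d))‖ = 1 :=
        norm_fE_symm_one _ hYψdot
      have hv : ‖(fE.symm (X.mulVec ψ) : EuclideanSpace ℂ (Fin d))‖ = 1 :=
        norm_fE_symm_one _ hXψdot
      have h := overlap_le (fE.symm ψ) (fE.symm (Y.mulVec ψ)) (fE.symm (X.mulVec ψ)) hp hu hv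
      rw [ip_eq, ip_eq, ip_eq] at h
      simp only [Equiv.apply_symm_apply] at h
      rw [hc_eq] at h
      have habsu : ‖star ψ ⬝ᵥ Y.mulVec ψ‖ = Real.cos γV := hαcos
      have habsv : ‖star ψ ⬝ᵥ X.mulVec ψ‖ = Real.cos γW := by
        rw [cosW, ← hW'fid, Real.sqrt_sq (norm_nonneg _)]
      rw [habsu, habsv] at h
      refine h.trans (le_of_eq ?_)
      rw [Real.cos_sub, cosV, cosW, sinV, sinW, Real.sq_sqrt hfV0, Real.sq_sqrt hfW0]
    have htr : ‖Matrix.trace Z‖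
        ≤ ((d : ℝ) - 2) + 2 * Real.cos (γV - γW) := by
      have h := abs_trace_le hd Z hZ1 ψ hψ
      nlinarith [hified, h]
    apply Real.sqrt_le_sqrt
    have hdr : (2 : ℝ) ≤ (d : ℝ) := by exact_mod_cast hd
    rw [hZdef] at htr
    nlinarith [htr]
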